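/- Let n and k be integers with n ≥ k ≥ 4. The minimum integer t ≥ 2 for which there exist integers n₁, …, n_t, each at least 2, satisfying ∑_{i=1}^{t} (n_i − 1) = n − 1 and n_i + n_j ≤ k for all i ≠ j, equals ⌈(n − k + 2⌊k/2⌋ − 1)/(⌊k/2⌋ − 1)⌉, which also equals ⌈(n − k + 1)/(⌊k/2⌋ − 1)⌉ + 2. -/

import Mathlib

open Finset

lemma fill {t : ℕ} (c : Fin t → ℕ) (hc : ∀ i, 2 ≤ c i) :
    ∀ S, t ≤ S → S ≤ ∑ i, (c i - 1) →
    ∃ m : Fin t → ℕ, (∀ i, 2 ≤ m i) ∧ (∀ i, m i ≤ c i) ∧ ∑ i, (m i - 1) = S := by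
  intro S hS
  induction S, hS using Nat.le_induction with
  | base =>
    intro _
    exact ⟨fun _ => 2, fun _ => le_refl _, fun i => hc i, by simp⟩
  | succ S hS ih =>
    intro hle
    obtain ⟨m, hm2, hmc, hsum⟩ := ih (by omega)
    have hlt : ∑ i, (m i - 1) < ∑ i, (c i - 1) := by omega
    obtain ⟨i, -, hi⟩ := Finset.exists_lt_of_sum_lt hlt
    have hic : m i < c i := by have := hc i; have := hm2 i; omega
    refine ⟨Function.update m i (m i + 1), ?_, ?_, ?_⟩
    · intro j
      rcases eq_or_ne j i with rfl | hji
      · simp; have := hm2 j; omega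
      · simp [Function.update_apply, hji]; exact hm2 j
    · intro j
      rcases eq_or_ne j i with rfl | hji
      · simpa using hic
      · simp [Function.update_apply, hji]; exact hmc j
    · have h2 : ∑ j, (m j - 1) = (m i - 1) + ∑ j ∈ univ.erase i, (m j - 1) :=
        (Finset.add_sum_erase _ _ (mem_univ i)).symm
      have h3 := (Finset.add_sum_erase univ
        (fun j => Function.update m i (m i + 1) j - 1) (mem_univ i)).symm
      simp only [Function.update_self] at h3
      have h4 : ∑ j ∈ univ.erase i, (Function.update m i (m i + 1) j - 1)
          = ∑ j ∈ univ.erase i, (m j - 1) := by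
        refine Finset.sum_congr rfl fun j hj => ?_
        rw [Function.update_of_ne (Finset.mem_erase.1 hj).1]
      rw [h3, h4]
      have := hm2 i
      omega

theorem min_t_cactus (n k : ℕ) (hk : 4 ≤ k) (hn : k ≤ n) :
    ∃ tmin : ℕ,
      IsLeast {t : ℕ | 2 ≤ t ∧ ∃ m : Fin t → ℕ, (∀ i, 2 ≤ m i) ∧
        (∑ i, (m i - 1)) = n - 1 ∧ (∀ i j, i ≠ j → m i + m j ≤ k)} tmin ∧
      (tmin : ℤ) = ⌈((n : ℚ) - (k : ℚ) + 2 * ((k / 2 : ℕ) : ℚ) - 1) / (((k / 2 : ℕ) : ℚ) - 1)⌉ ∧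
      (tmin : ℤ) = ⌈((n : ℚ) - (k : ℚ) + 1) / (((k / 2 : ℕ) : ℚ) - 1)⌉ + 2 := by
  obtain ⟨h, hh⟩ : ∃ h, h = k / 2 := ⟨_, rfl⟩
  rw [← hh]
  have hh2 : 2 ≤ h := by omega
  have hhk : 2 * h ≤ k := by omega
  have hk2h : k ≤ 2 * h + 1 := by omega
  obtain ⟨c, hc⟩ : ∃ c, c = (n - k + h - 1) / (h - 1) := ⟨_, rfl⟩
  have hd1 : c * (h - 1) ≤ n - k + h - 1 := by rw [hc]; exact Nat.div_mul_le_self _ _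
  have hd2 : n - k + h - 1 < (h - 1) * (c + 1) := by
    rw [hc]; exact Nat.lt_mul_div_succ _ (by omega)
  have key1 : n - k + 1 ≤ c * (h - 1) := by
    have e : (h - 1) * (c + 1) = c * (h - 1) + (h - 1) := by ring
    rw [e] at hd2
    generalize c * (h - 1) = p at hd2 ⊢
    omega
  have hcle : c ≤ n - k + h - 1 := by rw [hc]; exact Nat.div_le_self _ _
  refine ⟨c + 2, ⟨⟨by omega, ?_⟩, ?_⟩, ?_, ?_⟩
  · -- membership: construct m
    set C : Fin (c + 2) → ℕ := fun i => if (i : ℕ) = 0 then k - h else h with hC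
    have hCsum : ∑ i, (C i - 1) = (k - h - 1) + (c + 1) * (h - 1) := by
      have e1 : ∑ i, (C i - 1) = (C 0 - 1) + ∑ i ∈ univ.erase (0 : Fin (c + 2)), (C i - 1) :=
        (Finset.add_sum_erase _ _ (mem_univ (0 : Fin (c + 2)))).symm
      have h1 : C 0 - 1 = k - h - 1 := by simp [hC]
      have h2 : ∑ i ∈ univ.erase (0 : Fin (c + 2)), (C i - 1) = (c + 1) * (h - 1) := by
        have hcg : ∀ j ∈ univ.erase (0 : Fin (c + 2)), C j - 1 = h - 1 := by
          intro j hj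
          have hj0 : j ≠ 0 := (Finset.mem_erase.1 hj).1
          have hv : (j : ℕ) ≠ 0 := fun hv => hj0 (Fin.ext hv)
          simp only [hC, hv, ↓reduceIte]
        rw [Finset.sum_congr rfl hcg, Finset.sum_const,
          Finset.card_erase_of_mem (mem_univ _)]
        simp [Finset.card_univ, mul_comm]
      rw [e1, h1, h2]
    obtain ⟨m, hm2, hmc, hsum⟩ := fill C
      (fun i => by by_cases hi : (i : ℕ) = 0 <;> simp only [hC, hi, eq_self_iff_true, ↓reduceIte] <;> omega)
      (n - 1) (by omega)
      (by rw [hCsum]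
          have e : (c + 1) * (h - 1) = c * (h - 1) + (h - 1) := by ring
          rw [e]
          generalize c * (h - 1) = p at key1 ⊢
          omega)
    refine ⟨m, hm2, hsum, fun i j hij => ?_⟩
    have h1 := hmc i
    have h2 := hmc j
    by_cases hi : (i : ℕ) = 0 <;> by_cases hj : (j : ℕ) = 0
    · exact absurd (Fin.ext (hi.trans hj.symm)) hij
    · simp only [hC, hi, eq_self_iff_true, ↓reduceIte] at h1; simp only [hC, hj, eq_self_iff_true, ↓reduceIte] at h2; omega
    · simp only [hC, hi, eq_self_iff_true, ↓reduceIte] at h1; simp only [hC, hj, eq_self_iff_true, ↓reduceIte] at h2; omega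
    · simp only [hC, hi, eq_self_iff_true, ↓reduceIte] at h1; simp only [hC, hj, eq_self_iff_true, ↓reduceIte] at h2; omega
  · -- lower bound
    rintro t ⟨ht2, m, hm2, hsum, hpair⟩
    have hne : Nonempty (Fin t) := ⟨⟨0, by omega⟩⟩
    obtain ⟨i0, hi0⟩ := Finite.exists_max m
    obtain ⟨j0, hj0⟩ := Fintype.exists_ne_of_one_lt_card (by simp; omega) i0
    have hmax : ∀ j, j ≠ i0 → m j ≤ h := by
      intro j hj
      have h1 := hpair j i0 hj
      have h2 := hi0 j
      omega
    have hpair0 : m i0 + m j0 ≤ k := hpair i0 j0 (Ne.symm hj0)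
    have hj0mem : j0 ∈ univ.erase i0 := Finset.mem_erase.2 ⟨hj0, mem_univ _⟩
    have e1 : ∑ i, (m i - 1) = (m i0 - 1) + ∑ i ∈ univ.erase i0, (m i - 1) :=
      (Finset.add_sum_erase _ _ (mem_univ i0)).symm
    have e2 : ∑ i ∈ univ.erase i0, (m i - 1)
        = (m j0 - 1) + ∑ i ∈ (univ.erase i0).erase j0, (m i - 1) :=
      (Finset.add_sum_erase _ _ hj0mem).symm
    have hrest : ∑ i ∈ (univ.erase i0).erase j0, (m i - 1) ≤ (t - 2) * (h - 1) := by
      calc ∑ i ∈ (univ.erase i0).erase j0, (m i - 1)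
          ≤ ∑ _i ∈ (univ.erase i0).erase j0, (h - 1) := by
            refine Finset.sum_le_sum fun j hj => ?_
            have hji0 : j ≠ i0 := (Finset.mem_erase.1 (Finset.mem_erase.1 hj).2).1
            have := hmax j hji0
            omega
        _ = (t - 2) * (h - 1) := by
            rw [Finset.sum_const, Finset.card_erase_of_mem hj0mem,
              Finset.card_erase_of_mem (mem_univ i0)]
            simp only [Finset.card_univ, Fintype.card_fin, smul_eq_mul]
            rw [Nat.sub_sub]
    have hkey : n - k + 1 ≤ (t - 2) * (h - 1) := by
      have hmi2 := hm2 i0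
      have hmj2 := hm2 j0
      rw [e1, e2] at hsum
      generalize (t - 2) * (h - 1) = p at hrest ⊢
      omega
    have hct : c ≤ t - 2 := by
      rw [hc, Nat.div_le_iff_le_mul_add_pred (by omega)]
      calc n - k + h - 1 ≤ (t - 2) * (h - 1) + (h - 2) := by
            generalize (t - 2) * (h - 1) = p at hkey ⊢; omega
        _ ≤ (h - 1) * (t - 2) + (h - 1 - 1) := by rw [mul_comm]; omega
    omega
  all_goals {
    have hqh : (2 : ℚ) ≤ (h : ℚ) := by exact_mod_cast hh2
    have hdpos : (0 : ℚ) < (h : ℚ) - 1 := by linarith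
    have q1 : (c : ℚ) * ((h : ℚ) - 1) ≤ (n : ℚ) - k + h - 1 := by
      have h1 : ((c * (h - 1) : ℕ) : ℚ) ≤ ((n - k + h - 1 : ℕ) : ℚ) := by exact_mod_cast hd1
      push_cast [Nat.cast_sub (show 1 ≤ h by omega), Nat.cast_sub hn,
        Nat.cast_sub (show 1 ≤ n - k + h by omega)] at h1
      convert h1 using 1 <;> push_cast [Nat.cast_sub hn] <;> ring
    have q2 : (n : ℚ) - k + 1 ≤ (c : ℚ) * ((h : ℚ) - 1) := by
      have h1 : ((n - k + 1 : ℕ) : ℚ) ≤ ((c * (h - 1) : ℕ) : ℚ) := by exact_mod_cast key1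
      push_cast [Nat.cast_sub (show 1 ≤ h by omega), Nat.cast_sub hn] at h1
      convert h1 using 1 <;> push_cast [Nat.cast_sub hn] <;> ring
    have hce : ⌈((n : ℚ) - k + 1) / ((h : ℚ) - 1)⌉ = (c : ℤ) := by
      rw [Int.ceil_eq_iff]
      constructor
      · rw [lt_div_iff₀ hdpos]
        push_cast
        nlinarith
      · rw [div_le_iff₀ hdpos]
        push_cast
        nlinarith
    first
    | (rw [show ((n : ℚ) - k + 2 * (h : ℚ) - 1) / ((h : ℚ) - 1)
          = ((n : ℚ) - k + 1) / ((h : ℚ) - 1) + ((2 : ℤ) : ℚ) by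
            field_simp; ring, Int.ceil_add_intCast, hce]; push_cast; ring)
    | (rw [hce]; push_cast; ring) }
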